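/- For every Λ$-value V, every pure context K, and every Λ$-term M, if x ∉ FV(V) and x does not occur in K, then V $ K[M] =Λ$ (λx.(V $ K[x])) $ M. -/

import Mathlib

namespace Shift0

/-! ### The calculus Λ$ (de Bruijn representation) -/

/-- Terms of Λ$: variables, λ-abstractions, freeze `$(M)`, application, thaw `S₀(M)`. -/
inductive Tm : Type
  | var : Nat → Tm
  | lam : Tm → Tm
  | freeze : Tm → Tm
  | app : Tm → Tm → Tm
  | thaw : Tm → Tm
  deriving DecidableEq

namespace Tm

/-- Values of Λ$: variables, abstractions and frozen terms. -/
inductive IsValue : Tm → Prop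
  | var (n : Nat) : IsValue (.var n)
  | lam (M : Tm) : IsValue (.lam M)
  | freeze (M : Tm) : IsValue (.freeze M)

/-- Nonvalues of Λ$: applications and thawed terms. -/
inductive IsNonvalue : Tm → Prop
  | app (M N : Tm) : IsNonvalue (.app M N)
  | thaw (M : Tm) : IsNonvalue (.thaw M)

/-- Boolean value test. -/
def isVal : Tm → Bool
  | .var _ => true
  | .lam _ => true
  | .freeze _ => true
  | .app _ _ => false
  | .thaw _ => false

/-- Lift (shift) the free de Bruijn variables `≥ d` up by one. -/
def lift (d : Nat) : Tm → Tm
  | .var n => if n < d then .var n else .var (n+1)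
  | .lam M => .lam (lift (d+1) M)
  | .freeze M => .freeze (lift d M)
  | .app M N => .app (lift d M) (lift d N)
  | .thaw M => .thaw (lift d M)

/-- Capture-avoiding substitution `M[N/x]` (for the de Bruijn variable `x`);
the variables above `x` are shifted down by one. -/
def subst : Tm → Nat → Tm → Tm
  | .var n, x, N => if n = x then N else if n < x then .var n else .var (n-1)
  | .lam M, x, N => .lam (subst M (x+1) (N.lift 0))
  | .freeze M, x, N => .freeze (subst M x N)
  | .app M L, x, N => .app (subst M x N) (subst L x N)
  | .thaw M, x, N => .thaw (subst M x N)

/-- `M $ N` is sugar for `$(N) M`. -/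
def dol (M N : Tm) : Tm := .app (.freeze N) M

/-- `let x = M in N` is sugar for `S₀k.((λx.(k $ N)) $ M)`;
here `N` has the let-bound variable as de Bruijn index `0`. -/
def letIn (M N : Tm) : Tm :=
  .thaw (.lam (dol (.lam (dol (.var 1) (N.lift 1))) (M.lift 0)))

end Tm

/-- Bindable contexts `J ::= [] M | V [] | S₀([])`. -/
inductive JCtx : Type
  | appL : Tm → JCtx
  | appR : Tm → JCtx
  | thaw : JCtx

namespace JCtx

/-- Well-formedness: in `V []` the term `V` must be a value. -/
def Wf : JCtx → Prop
  | .appL _ => True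
  | .appR V => V.IsValue
  | .thaw => True

/-- Plugging a term into a bindable context. -/
def plug : JCtx → Tm → Tm
  | .appL N, M => .app M N
  | .appR V, M => .app V M
  | .thaw, M => .thaw M

/-- Lift the free variables `≥ d` of a bindable context. -/
def lift (d : Nat) : JCtx → JCtx
  | .appL N => .appL (N.lift d)
  | .appR V => .appR (V.lift d)
  | .thaw => .thaw

end JCtx

/-- Pure contexts `K ::= [] | J[K]`, represented as a list of bindable
contexts (head outermost). -/
abbrev KCtx : Type := List JCtx

/-- Plugging a term into a pure context. -/
def KCtx.plug : KCtx → Tm → Tm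
  | [], M => M
  | (J :: K), M => J.plug (KCtx.plug K M)

/-- Well-formedness of a pure context. -/
def KCtx.Wf (K : KCtx) : Prop := ∀ J ∈ K, JCtx.Wf J

/-- Lift the free variables `≥ d` of a pure context. -/
def KCtx.lift (d : Nat) (K : KCtx) : KCtx := K.map (JCtx.lift d)

namespace Tm

/-- The basic contractions of Λ$. -/
inductive Contr : Tm → Tm → Prop
  | betav (M V : Tm) : V.IsValue → Contr (.app (.lam M) V) (M.subst 0 V)
  | etav (V : Tm) : V.IsValue → Contr (.lam (.app (V.lift 0) (.var 0))) V
  | dolv (V : Tm) : V.IsValue → Contr (.freeze V) (.lam (.app (.var 0) (V.lift 0)))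
  | dolsh (V : Tm) : V.IsValue → Contr (.freeze (.thaw V)) V
  | shdol (M : Tm) : Contr (.thaw (.freeze M)) M
  | pure (V : Tm) : V.IsValue → Contr (.thaw (.lam (.app (.var 0) (V.lift 0)))) V
  | bind (J : JCtx) (P : Tm) : J.Wf → P.IsNonvalue →
      Contr (J.plug P) (letIn P ((J.lift 0).plug (.var 0)))

/-- One-step reduction of Λ$: closure of the contractions under arbitrary
contexts (including under binders). -/
inductive Step : Tm → Tm → Prop
  | contr {M N : Tm} : Contr M N → Step M N
  | lam {M N : Tm} : Step M N → Step (.lam M) (.lam N)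
  | freeze {M N : Tm} : Step M N → Step (.freeze M) (.freeze N)
  | appL {M N L : Tm} : Step M N → Step (.app M L) (.app N L)
  | appR {M N L : Tm} : Step M N → Step (.app L M) (.app L N)
  | thaw {M N : Tm} : Step M N → Step (.thaw M) (.thaw N)

/-- Multi-step reduction `↠Λ$`. -/
def Steps : Tm → Tm → Prop := Relation.ReflTransGen Step

/-- Convertibility `=Λ$`: the equivalence generated by reduction. -/
def Equiv : Tm → Tm → Prop := Relation.EqvGen Step

end Tm

/-! ### The pure λ-calculus with βη -/

/-- Terms of the pure λ-calculus. -/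
inductive Lam : Type
  | var : Nat → Lam
  | lam : Lam → Lam
  | app : Lam → Lam → Lam
  deriving DecidableEq

namespace Lam

/-- Lift the free de Bruijn variables `≥ d` up by one. -/
def lift (d : Nat) : Lam → Lam
  | .var n => if n < d then .var n else .var (n+1)
  | .lam M => .lam (lift (d+1) M)
  | .app M N => .app (lift d M) (lift d N)

/-- Capture-avoiding substitution `M[N/x]`. -/
def subst : Lam → Nat → Lam → Lam
  | .var n, x, N => if n = x then N else if n < x then .var n else .var (n-1)
  | .lam M, x, N => .lam (subst M (x+1) (N.lift 0))
  | .app M L, x, N => .app (subst M x N) (subst L x N)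

/-- β and η contractions. -/
inductive Contr : Lam → Lam → Prop
  | beta (M N : Lam) : Contr (.app (.lam M) N) (M.subst 0 N)
  | eta (M : Lam) : Contr (.lam (.app (M.lift 0) (.var 0))) M

/-- One-step βη-reduction, closed under arbitrary contexts. -/
inductive Step : Lam → Lam → Prop
  | contr {M N : Lam} : Contr M N → Step M N
  | lam {M N : Lam} : Step M N → Step (.lam M) (.lam N)
  | appL {M N L : Lam} : Step M N → Step (.app M L) (.app N L)
  | appR {M N L : Lam} : Step M N → Step (.app L M) (.app L N)

/-- Multi-step βη-reduction `↠λ`. -/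
def Steps : Lam → Lam → Prop := Relation.ReflTransGen Step

/-- βη-convertibility `=λ`. -/
def Equiv : Lam → Lam → Prop := Relation.EqvGen Step

end Lam

end Shift0

namespace Shift0

/-! ### The CPS translation `* : Λ$ → λ` and its value part `†` -/

mutual

/-- The CPS translation `M*`.  It is the full unfolding of the equations
`V* = λk.k V†`, `J[P]* = λk.P* (λx.(J[x]* k))`, `(V W)* = V† W†` and
`(S₀(V))* = V†`. -/
def cps : Tm → Lam
  | .var n => .lam (.app (.var 0) (.var (n+1)))
  | .lam M => .lam (.app (.var 0) ((Lam.lam (cps M)).lift 0))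
  | .freeze M => .lam (.app (.var 0) ((cps M).lift 0))
  | .app M N =>
      if M.isVal then
        if N.isVal then .app (cpsV M) (cpsV N)
        else
          .lam (.app ((cps N).lift 0)
            (.lam (.app (.app (((cpsV M).lift 0).lift 0) (.var 0)) (.var 1))))
      else
        if N.isVal then
          .lam (.app ((cps M).lift 0)
            (.lam (.app (.app (.var 0) (((cpsV N).lift 0).lift 0)) (.var 1))))
        else
          .lam (.app ((cps M).lift 0)
            (.lam (.app
              (.lam (.app ((((cps N).lift 0).lift 0).lift 0)
                (.lam (.app (.app (.var 2) (.var 0)) (.var 1)))))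
              (.var 1))))
  | .thaw M =>
      if M.isVal then cpsV M
      else .lam (.app ((cps M).lift 0) (.lam (.app (.var 0) (.var 1))))

/-- The value part `V†` of the CPS translation (junk on nonvalues). -/
def cpsV : Tm → Lam
  | .var n => .var n
  | .lam M => .lam (cps M)
  | .freeze M => cps M
  | .app _ _ => .var 0
  | .thaw _ => .var 0

end

/-! ### The direct-style translation `# : λ → Λ$` and its auxiliary `♮` -/

namespace Lam

/-- Does the de Bruijn variable `x` occur free in the term? -/
def hasVar (x : Nat) : Lam → Bool
  | .var n => n = x
  | .lam M => hasVar (x+1) M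
  | .app M N => hasVar x M || hasVar x N

/-- Shift the free de Bruijn variables `> d` down by one
(inverse of `lift d` on terms not containing `d` free). -/
def lower (d : Nat) : Lam → Lam
  | .var n => if d < n then .var (n-1) else .var n
  | .lam M => .lam (lower (d+1) M)
  | .app M N => .app (lower d M) (lower d N)

/-- Size of a λ-term. -/
def size : Lam → Nat
  | .var _ => 1
  | .lam M => size M + 1
  | .app M N => size M + size N + 1

theorem size_lower (d : Nat) (M : Lam) : (lower d M).size = M.size := by
  induction M generalizing d with
  | var n => simp only [lower]; split <;> rfl
  | lam M ih => simp [lower, size, ih]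
  | app M N ihM ihN => simp [lower, size, ihM, ihN]

end Lam

mutual

/-- The direct-style translation `M#`; the case `(λx.x N)# = N♮` (with
`x ∉ FV(N)`) is rendered by checking that de Bruijn variable `0` does not
occur in `N` and lowering the remaining variables. -/
def ds : Lam → Tm
  | .var n => .thaw (.var n)
  | .app M N => .app (nat M) (nat N)
  | .lam (.app (.var 0) N) =>
      if N.hasVar 0 then .thaw (.lam (.app (.var 0) (nat N)))
      else nat (N.lower 0)
  | .lam M => .thaw (.lam (ds M))
termination_by M => M.size
decreasing_by all_goals simp [Lam.size, Lam.size_lower] <;> omega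

/-- The auxiliary direct-style translation `M♮`. -/
def nat : Lam → Tm
  | .var n => .var n
  | .lam M => .lam (ds M)
  | .app M N => .freeze (.app (nat M) (nat N))
termination_by M => M.size
decreasing_by all_goals simp [Lam.size, Lam.size_lower] <;> omega

end

end Shift0

namespace Shift0

/-! ### Materzok's calculus λ$ -/

/-- Terms of λ$: variables, abstractions, applications, `S₀x.e`
(the body is under a binder) and `e $ e'`. -/
inductive LTm : Type
  | var : Nat → LTm
  | lam : LTm → LTm
  | app : LTm → LTm → LTm
  | shift : LTm → LTm
  | dollar : LTm → LTm → LTm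
  deriving DecidableEq

namespace LTm

/-- Values of λ$: variables and abstractions. -/
inductive IsValue : LTm → Prop
  | var (n : Nat) : IsValue (.var n)
  | lam (e : LTm) : IsValue (.lam e)

/-- Lift the free de Bruijn variables `≥ d` up by one. -/
def lift (d : Nat) : LTm → LTm
  | .var n => if n < d then .var n else .var (n+1)
  | .lam e => .lam (lift (d+1) e)
  | .app e f => .app (lift d e) (lift d f)
  | .shift e => .shift (lift (d+1) e)
  | .dollar e f => .dollar (lift d e) (lift d f)

/-- Capture-avoiding substitution `e[v/x]`. -/
def subst : LTm → Nat → LTm → LTm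
  | .var n, x, N => if n = x then N else if n < x then .var n else .var (n-1)
  | .lam e, x, N => .lam (subst e (x+1) (N.lift 0))
  | .app e f, x, N => .app (subst e x N) (subst f x N)
  | .shift e, x, N => .shift (subst e (x+1) (N.lift 0))
  | .dollar e f, x, N => .dollar (subst e x N) (subst f x N)

end LTm

/-- Pure contexts of λ$: `E ::= [] | E e | v E | E $ e`. -/
inductive ECtx : Type
  | hole : ECtx
  | appL : ECtx → LTm → ECtx
  | appR : LTm → ECtx → ECtx
  | dolL : ECtx → LTm → ECtx

namespace ECtx

/-- Well-formedness: in `v E` the term `v` must be a value. -/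
def Wf : ECtx → Prop
  | .hole => True
  | .appL E _ => E.Wf
  | .appR v E => v.IsValue ∧ E.Wf
  | .dolL E _ => E.Wf

/-- Plugging a term into a pure context of λ$. -/
def plug : ECtx → LTm → LTm
  | .hole, e => e
  | .appL E f, e => .app (E.plug e) f
  | .appR v E, e => .app v (E.plug e)
  | .dolL E f, e => .dollar (E.plug e) f

/-- Lift the free variables `≥ d` of a pure context. -/
def lift (d : Nat) : ECtx → ECtx
  | .hole => .hole
  | .appL E f => .appL (E.lift d) (f.lift d)
  | .appR v E => .appR (v.lift d) (E.lift d)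
  | .dolL E f => .dolL (E.lift d) (f.lift d)

end ECtx

namespace LTm

/-- The axioms of λ$. -/
inductive Ax : LTm → LTm → Prop
  | betav (e v : LTm) : v.IsValue → Ax (.app (.lam e) v) (e.subst 0 v)
  | etav (v : LTm) : v.IsValue → Ax (.lam (.app (v.lift 0) (.var 0))) v
  | dolv (v w : LTm) : v.IsValue → w.IsValue → Ax (.dollar v w) (.app v w)
  | dolE (v : LTm) (E : ECtx) (e : LTm) : v.IsValue → E.Wf →
      Ax (.dollar v (E.plug e))
         (.dollar (.lam (.dollar (v.lift 0) ((E.lift 0).plug (.var 0)))) e)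
  | betad (v e : LTm) : v.IsValue → Ax (.dollar v (.shift e)) (e.subst 0 v)
  | etad (e : LTm) : Ax (.shift (.dollar (.var 0) (e.lift 0))) e

/-- The axioms applied in an arbitrary context. -/
inductive AStep : LTm → LTm → Prop
  | ax {e f : LTm} : Ax e f → AStep e f
  | lam {e f : LTm} : AStep e f → AStep (.lam e) (.lam f)
  | appL {e f g : LTm} : AStep e f → AStep (.app e g) (.app f g)
  | appR {e f g : LTm} : AStep e f → AStep (.app g e) (.app g f)
  | shift {e f : LTm} : AStep e f → AStep (.shift e) (.shift f)
  | dolL {e f g : LTm} : AStep e f → AStep (.dollar e g) (.dollar f g)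
  | dolR {e f g : LTm} : AStep e f → AStep (.dollar g e) (.dollar g f)

/-- The equational theory `=λ$` generated by the axioms. -/
def Equiv : LTm → LTm → Prop := Relation.EqvGen AStep

end LTm

/-- The embedding `ι : λ$ → Λ$`. -/
def iota : LTm → Tm
  | .var n => .var n
  | .lam e => .lam (iota e)
  | .app e f => .app (iota e) (iota f)
  | .shift e => .thaw (.lam (iota e))
  | .dollar e f => .app (.freeze (iota f)) (iota e)

/-- The translation `π : Λ$ → λ$`. -/
def pi : Tm → LTm
  | .var n => .var n
  | .lam M => .lam (pi M)
  | .freeze M => .lam (.dollar (.var 0) ((pi M).lift 0))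
  | .app M N => .app (pi M) (pi N)
  | .thaw M => .app (.lam (.shift (.app (.var 1) (.var 0)))) (pi M)

/-- Materzok's CPS translation `⟦·⟧ : λ$ → λ` (with the value translation
`⟪x⟫ = x`, `⟪λx.e⟫ = λx.⟦e⟧` inlined). -/
def mcps : LTm → Lam
  | .var n => .lam (.app (.var 0) (.var (n+1)))
  | .lam e => .lam (.app (.var 0) ((Lam.lam (mcps e)).lift 0))
  | .app e f => .lam (.app ((mcps e).lift 0)
      (.lam (.app (((mcps f).lift 0).lift 0)
        (.lam (.app (.app (.var 1) (.var 0)) (.var 2))))))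
  | .shift e => .lam (mcps e)
  | .dollar e f => .lam (.app ((mcps e).lift 0)
      (.lam (.app (.app (((mcps f).lift 0).lift 0) (.var 0)) (.var 1))))

end Shift0

namespace Shift0

/-! ### Auxiliary lemmas for `dol_pure_context` -/

namespace Tm

theorem lift_isValue {V : Tm} (h : V.IsValue) (d : Nat) : (V.lift d).IsValue := by
  cases h with
  | var n => simp only [lift]; split <;> exact .var _
  | lam M => exact .lam _
  | freeze M => exact .freeze _

theorem subst_lift (M : Tm) (d : Nat) (N : Tm) : (M.lift d).subst d N = M := by
  induction M generalizing d N with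
  | var n =>
    by_cases h : n < d
    · simp [lift, subst, h, Nat.ne_of_lt h]
    · have h1 : ¬ (n + 1 = d) := by omega
      have h2 : ¬ (n + 1 < d) := by omega
      simp [lift, subst, h, h1, h2]
  | lam M ih => simp [lift, subst, ih]
  | freeze M ih => simp [lift, subst, ih]
  | app M N ihM ihN => simp [lift, subst, ihM, ihN]
  | thaw M ih => simp [lift, subst, ih]

theorem lift_var (d n : Nat) : (Tm.var n).lift d = .var (if n < d then n else n + 1) := by
  simp only [lift]; split <;> simp_all

theorem lift_lift (M : Tm) : ∀ e d, e ≤ d → (M.lift d).lift e = (M.lift e).lift (d + 1) := by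
  induction M with
  | var n =>
    intro e d h
    simp only [lift_var]
    congr 1
    split_ifs <;> omega
  | lam M ih => intro e d h; simp [lift, ih (e+1) (d+1) (by omega)]
  | freeze M ih => intro e d h; simp [lift, ih e d h]
  | app M N ihM ihN => intro e d h; simp [lift, ihM e d h, ihN e d h]
  | thaw M ih => intro e d h; simp [lift, ih e d h]

theorem val_or_nonval (M : Tm) : M.IsValue ∨ M.IsNonvalue := by
  cases M with
  | var n => exact .inl (.var n)
  | lam M => exact .inl (.lam M)
  | freeze M => exact .inl (.freeze M)
  | app M N => exact .inr (.app M N)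
  | thaw M => exact .inr (.thaw M)

theorem Equiv.of_steps {M N : Tm} (h : Tm.Steps M N) : Tm.Equiv M N := by
  induction h with
  | refl => exact Relation.EqvGen.refl _
  | tail _ s ih => exact Relation.EqvGen.trans _ _ _ ih (Relation.EqvGen.rel _ _ s)

theorem equiv_congr {f : Tm → Tm} (hf : ∀ a b, Tm.Step a b → Tm.Step (f a) (f b))
    {M N : Tm} (h : Tm.Equiv M N) : Tm.Equiv (f M) (f N) := by
  induction h with
  | rel _ _ s => exact .rel _ _ (hf _ _ s)
  | refl _ => exact .refl _
  | symm _ _ _ ih => exact .symm _ _ ih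
  | trans _ _ _ _ _ ih1 ih2 => exact .trans _ _ _ ih1 ih2

theorem equiv_appR {L M N : Tm} (h : Tm.Equiv M N) :
    Tm.Equiv (.app L M) (.app L N) :=
  equiv_congr (fun _ _ s => .appR s) h

theorem equiv_lam {M N : Tm} (h : Tm.Equiv M N) : Tm.Equiv (.lam M) (.lam N) :=
  equiv_congr (fun _ _ s => .lam s) h

end Tm

namespace JCtx

theorem lift_plug (J : JCtx) (d : Nat) (M : Tm) :
    (J.plug M).lift d = (J.lift d).plug (M.lift d) := by
  cases J <;> rfl

theorem lift_lift0 (J : JCtx) : (J.lift 0).lift 1 = (J.lift 0).lift 0 := by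
  cases J <;> simp [JCtx.lift, Tm.lift_lift _ 0 0 (Nat.le_refl 0)]

theorem lift_wf {J : JCtx} (h : J.Wf) (d : Nat) : (J.lift d).Wf := by
  cases J with
  | appL N => trivial
  | appR V => exact Tm.lift_isValue h d
  | thaw => trivial

end JCtx

namespace KCtx

theorem subst_lift_plug (K : KCtx) (M W : Tm) :
    ((K.lift 0).plug M).subst 0 W = K.plug (M.subst 0 W) := by
  induction K with
  | nil => rfl
  | cons J K ih =>
    simp only [KCtx.lift] at ih
    cases J <;>
      simp [KCtx.lift, KCtx.plug, JCtx.lift, JCtx.plug, Tm.subst, ih, Tm.subst_lift]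

end KCtx

open Tm in
/-- The key single-frame lemma: `V $ J[N] =Λ$ (λx.(V $ J[x])) $ N`. -/
theorem dol_bindable_context (V : Tm) (J : JCtx) (N : Tm)
    (hV : V.IsValue) (hJ : J.Wf) :
    Tm.Equiv (Tm.dol V (J.plug N))
      (Tm.dol (.lam (Tm.dol (V.lift 0) ((J.lift 0).plug (.var 0)))) N) := by
  rcases Tm.val_or_nonval N with hN | hN
  · -- `N` is a value: the right-hand side reduces to the left-hand side.
    refine Relation.EqvGen.symm _ _ (Tm.Equiv.of_steps ?_)
    set L : Tm := .lam (Tm.dol (V.lift 0) ((J.lift 0).plug (.var 0))) with hL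
    have s1 : Tm.Step (Tm.dol L N) (.app (.lam (.app (.var 0) (N.lift 0))) L) :=
      Tm.Step.appL (Tm.Step.contr (Tm.Contr.dolv N hN))
    have s2 : Tm.Step (.app (.lam (.app (.var 0) (N.lift 0))) L) (.app L N) := by
      have h := Tm.Step.contr (Tm.Contr.betav (.app (.var 0) (N.lift 0)) L (.lam _))
      simpa [Tm.subst, Tm.subst_lift] using h
    have s3 : Tm.Step (.app L N) (Tm.dol V (J.plug N)) := by
      have h := Tm.Step.contr
        (Tm.Contr.betav (Tm.dol (V.lift 0) ((J.lift 0).plug (.var 0))) N hN)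
      have hsub : (Tm.dol (V.lift 0) ((J.lift 0).plug (.var 0))).subst 0 N
          = Tm.dol V (J.plug N) := by
        have := KCtx.subst_lift_plug [J] (.var 0) N
        simp only [KCtx.lift, List.map, KCtx.plug] at this
        simp [Tm.dol, Tm.subst, Tm.subst_lift, this]
      rw [hsub] at h
      exact h
    exact Relation.ReflTransGen.head s1
      (Relation.ReflTransGen.head s2 (Relation.ReflTransGen.single s3))
  · -- `N` is a nonvalue: the left-hand side reduces to the right-hand side.
    refine Tm.Equiv.of_steps ?_
    set X : Tm := (J.lift 0).plug (.var 0) with hX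
    have s1 : Tm.Step (Tm.dol V (J.plug N)) (.app (.freeze (Tm.letIn N X)) V) :=
      Tm.Step.appL (Tm.Step.freeze (Tm.Step.contr (Tm.Contr.bind J N hJ hN)))
    have s2 : Tm.Step (.app (.freeze (Tm.letIn N X)) V)
        (.app (.lam (Tm.dol (.lam (Tm.dol (.var 1) (X.lift 1))) (N.lift 0))) V) :=
      Tm.Step.appL (Tm.Step.contr (Tm.Contr.dolsh _ (.lam _)))
    have s3 : Tm.Step (.app (.lam (Tm.dol (.lam (Tm.dol (.var 1) (X.lift 1))) (N.lift 0))) V)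
        (Tm.dol (.lam (Tm.dol (V.lift 0) X)) N) := by
      have h := Tm.Step.contr
        (Tm.Contr.betav (Tm.dol (.lam (Tm.dol (.var 1) (X.lift 1))) (N.lift 0)) V hV)
      have hsub : (Tm.dol (.lam (Tm.dol (.var 1) (X.lift 1))) (N.lift 0)).subst 0 V
          = Tm.dol (.lam (Tm.dol (V.lift 0) X)) N := by
        simp [Tm.dol, Tm.subst, Tm.subst_lift]
      rw [hsub] at h
      exact h
    exact Relation.ReflTransGen.head s1
      (Relation.ReflTransGen.head s2 (Relation.ReflTransGen.single s3))

/-- For every Λ$-value `V`, pure context `K` and term `M`,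
`V $ K[M] =Λ$ (λx.(V $ K[x])) $ M`, where the freshness of `x` for `V` and `K`
is rendered by lifting their free variables. -/
theorem dol_pure_context (V : Tm) (K : KCtx) (M : Tm) (hV : V.IsValue) (hK : K.Wf) :
    Tm.Equiv (Tm.dol V (K.plug M))
      (Tm.dol (.lam (Tm.dol (V.lift 0) ((K.lift 0).plug (.var 0)))) M) := by
  induction K generalizing V with
  | nil =>
    -- `λx.(V $ x) ↠ V`, hence the two sides are convertible.
    refine Relation.EqvGen.symm _ _ (Tm.equiv_appR (Tm.Equiv.of_steps ?_))
    have s1 : Tm.Step (Tm.lam (Tm.dol (V.lift 0) (.var 0)))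
        (.lam (.app (.lam (.app (.var 0) ((Tm.var 0).lift 0))) (V.lift 0))) :=
      Tm.Step.lam (Tm.Step.appL (Tm.Step.contr (Tm.Contr.dolv (.var 0) (.var 0))))
    have s2 : Tm.Step (Tm.lam (.app (.lam (.app (.var 0) ((Tm.var 0).lift 0))) (V.lift 0)))
        (.lam (.app (V.lift 0) (.var 0))) := by
      have h := Tm.Step.lam (Tm.Step.contr
        (Tm.Contr.betav (.app (.var 0) ((Tm.var 0).lift 0)) (V.lift 0)
          (Tm.lift_isValue hV 0)))
      simpa [Tm.lift, Tm.subst] using h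
    have s3 : Tm.Step (Tm.lam (.app (V.lift 0) (.var 0))) V :=
      Tm.Step.contr (Tm.Contr.etav V hV)
    exact Relation.ReflTransGen.head s1
      (Relation.ReflTransGen.head s2 (Relation.ReflTransGen.single s3))
  | cons J K' ih =>
    have hJ : J.Wf := hK J List.mem_cons_self
    have hK' : KCtx.Wf K' := fun J' h => hK J' (List.mem_cons_of_mem _ h)
    set X : Tm := ((KCtx.lift 0 K').plug (.var 0)) with hXdef
    set L : Tm := .lam (Tm.dol (V.lift 0) ((J.lift 0).plug (.var 0))) with hLdef
    have e1 : Tm.Equiv (Tm.dol V (KCtx.plug (J :: K') M)) (Tm.dol L (KCtx.plug K' M)) :=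
      dol_bindable_context V J (KCtx.plug K' M) hV hJ
    have e2 : Tm.Equiv (Tm.dol L (KCtx.plug K' M))
        (Tm.dol (.lam (Tm.dol (L.lift 0) X)) M) := ih L (.lam _) hK'
    have hLlift : L.lift 0
        = .lam (Tm.dol ((V.lift 0).lift 0) (((J.lift 0).lift 0).plug (.var 0))) := by
      have h1 : (V.lift 0).lift 1 = (V.lift 0).lift 0 :=
        (Tm.lift_lift V 0 0 (Nat.le_refl 0)).symm
      have h2 : ((J.lift 0).plug (.var 0)).lift 1
          = ((J.lift 0).lift 0).plug (.var 0) := by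
        rw [JCtx.lift_plug, JCtx.lift_lift0]
        rfl
      simp [hLdef, Tm.dol, Tm.lift, h1, h2]
    have e3 : Tm.Equiv (Tm.dol (L.lift 0) X)
        (Tm.dol (V.lift 0) ((J.lift 0).plug X)) := by
      rw [hLlift]
      exact Relation.EqvGen.symm _ _
        (dol_bindable_context (V.lift 0) (J.lift 0) X (Tm.lift_isValue hV 0)
          (JCtx.lift_wf hJ 0))
    have e4 : Tm.Equiv (Tm.dol (.lam (Tm.dol (L.lift 0) X)) M)
        (Tm.dol (.lam (Tm.dol (V.lift 0) ((J.lift 0).plug X))) M) :=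
      Tm.equiv_appR (Tm.equiv_lam e3)
    have hfin : Tm.dol (.lam (Tm.dol (V.lift 0) ((J.lift 0).plug X))) M
        = Tm.dol (.lam (Tm.dol (V.lift 0) ((KCtx.lift 0 (J :: K')).plug (.var 0)))) M := by
      rfl
    rw [hfin] at e4
    exact Relation.EqvGen.trans _ _ _ e1 (Relation.EqvGen.trans _ _ _ e2 e4)

end Shift0
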